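/- For every undirected graph G = ([p], E), the polytope CIM_G (convex hull of characteristic imsets of DAGs with skeleton exactly G) is a face of CIM_p. -/

import Mathlib

open scoped Classical

/-- A directed acyclic graph on vertex set `Fin p`. -/
structure DAGraph (p : ℕ) where
  E : Fin p → Fin p → Prop
  acyclic : ∀ i, ¬ Relation.TransGen E i i

/-- The characteristic imset of a directed graph given by the relation `E`. -/
noncomputable def imsetRel {p : ℕ} (E : Fin p → Fin p → Prop) (S : Finset (Fin p)) : ℝ :=
  if ∃ i ∈ S, ∀ j ∈ S, j ≠ i → E j i then 1 else 0

/-- The skeleton (underlying undirected graph) of a DAG. -/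
def DAGraph.skeleton {p : ℕ} (G : DAGraph p) : SimpleGraph (Fin p) where
  Adj a b := G.E a b ∨ G.E b a
  symm := ⟨fun a b h => Or.symm h⟩
  loopless := ⟨fun a h =>
    h.elim (fun h' => G.acyclic a (Relation.TransGen.single h'))
      (fun h' => G.acyclic a (Relation.TransGen.single h'))⟩

/-- The characteristic imset of a DAG. -/
noncomputable def DAGraph.cim {p : ℕ} (G : DAGraph p) : Finset (Fin p) → ℝ := imsetRel G.E

/-- `G.vStruct a b c` : `a → b ← c` is a v-structure (with `a`, `c` non-adjacent). -/
def DAGraph.vStruct {p : ℕ} (G : DAGraph p) (a b c : Fin p) : Prop :=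
  a ≠ c ∧ G.E a b ∧ G.E c b ∧ ¬ G.skeleton.Adj a c

/-- The relation obtained from `E` by reversing the single edge `i → j`. -/
def reverseRel {p : ℕ} (E : Fin p → Fin p → Prop) (i j : Fin p) : Fin p → Fin p → Prop :=
  fun a b => (E a b ∧ ¬(a = i ∧ b = j)) ∨ (a = j ∧ b = i)

/-- The set of characteristic imsets of all DAGs on `p` nodes. -/
noncomputable def cimVertices (p : ℕ) : Set (Finset (Fin p) → ℝ) :=
  {x | ∃ G : DAGraph p, x = G.cim}

/-- The characteristic imset polytope `CIM_p`. -/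
noncomputable def cimPolytope (p : ℕ) : Set (Finset (Fin p) → ℝ) :=
  convexHull ℝ (cimVertices p)

/-- Dot product of vectors indexed by subsets of `[p]`. -/
noncomputable def dotF {p : ℕ} (w x : Finset (Fin p) → ℝ) : ℝ :=
  ∑ S : Finset (Fin p), w S * x S

/-- `F` is a face of `P`: the set of maximizers of some linear functional over `P`. -/
def IsFaceOf {p : ℕ} (F P : Set (Finset (Fin p) → ℝ)) : Prop :=
  ∃ (w : Finset (Fin p) → ℝ) (a : ℝ), (∀ x ∈ P, dotF w x ≤ a) ∧ F = {x ∈ P | dotF w x = a}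

/-- The segment between distinct `u` and `v` is an edge (one-dimensional face) of `P`. -/
def IsEdgeOf {p : ℕ} (u v : Finset (Fin p) → ℝ) (P : Set (Finset (Fin p) → ℝ)) : Prop :=
  u ≠ v ∧ ∃ (w : Finset (Fin p) → ℝ) (a : ℝ), (∀ x ∈ P, dotF w x ≤ a) ∧
    {x ∈ P | dotF w x = a} = segment ℝ u v


section Aux

variable {p : ℕ}

/-- Weight vector: `1` on edge-pairs of `G`, `-1` on non-edge pairs, `0` otherwise. -/
noncomputable def wG (G : SimpleGraph (Fin p)) : Finset (Fin p) → ℝ :=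
  fun S => if ∃ i j, G.Adj i j ∧ S = {i, j} then 1 else if S.card = 2 then -1 else 0

noncomputable def aG (G : SimpleGraph (Fin p)) : ℝ :=
  ∑ S : Finset (Fin p), (if ∃ i j, G.Adj i j ∧ S = {i, j} then (1:ℝ) else 0)

lemma cim_nonneg (D : DAGraph p) (S : Finset (Fin p)) : 0 ≤ D.cim S := by
  unfold DAGraph.cim imsetRel; split_ifs <;> norm_num

lemma cim_le_one (D : DAGraph p) (S : Finset (Fin p)) : D.cim S ≤ 1 := by
  unfold DAGraph.cim imsetRel; split_ifs <;> norm_num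

lemma cim_pair (D : DAGraph p) {i j : Fin p} (hij : i ≠ j) :
    D.cim {i, j} = if D.skeleton.Adj i j then 1 else 0 := by
  unfold DAGraph.cim imsetRel
  congr 1
  simp only [eq_iff_iff]
  constructor
  · rintro ⟨k, hk, h⟩
    simp only [Finset.mem_insert, Finset.mem_singleton] at hk
    rcases hk with rfl | rfl
    · exact Or.inr (h j (by simp) hij.symm)
    · exact Or.inl (h i (by simp) hij)
  · rintro (h | h)
    · exact ⟨j, by simp, fun l hl hlj => by
        simp only [Finset.mem_insert, Finset.mem_singleton] at hl
        rcases hl with rfl | rfl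
        · exact h
        · exact absurd rfl hlj⟩
    · exact ⟨i, by simp, fun l hl hli => by
        simp only [Finset.mem_insert, Finset.mem_singleton] at hl
        rcases hl with rfl | rfl
        · exact absurd rfl hli
        · exact h⟩

lemma term_le (G : SimpleGraph (Fin p)) (D : DAGraph p) (S : Finset (Fin p)) :
    wG G S * D.cim S ≤ (if ∃ i j, G.Adj i j ∧ S = {i, j} then (1:ℝ) else 0) := by
  unfold wG
  split_ifs with h1 h2
  · simpa using cim_le_one D S
  · have := cim_nonneg D S; nlinarith
  · simp

lemma dot_le (G : SimpleGraph (Fin p)) (D : DAGraph p) : dotF (wG G) D.cim ≤ aG G :=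
  Finset.sum_le_sum fun S _ => term_le G D S

lemma dot_eq_iff (G : SimpleGraph (Fin p)) (D : DAGraph p) :
    dotF (wG G) D.cim = aG G ↔ D.skeleton = G := by
  rw [show (dotF (wG G) D.cim = aG G) ↔
      ∀ S ∈ Finset.univ, wG G S * D.cim S
        = (if ∃ i j, G.Adj i j ∧ S = {i, j} then (1:ℝ) else 0) from
    Finset.sum_eq_sum_iff_of_le (fun S _ => term_le G D S)]
  constructor
  · intro h
    ext i j
    constructor
    · intro hsk
      have hij : i ≠ j := D.skeleton.ne_of_adj hsk
      by_contra hG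
      have hne : ¬ ∃ a b, G.Adj a b ∧ ({i, j} : Finset (Fin p)) = {a, b} := by
        rintro ⟨a, b, hab, hset⟩
        have hia : i ∈ ({a, b} : Finset (Fin p)) := by rw [← hset]; simp
        have hja : j ∈ ({a, b} : Finset (Fin p)) := by rw [← hset]; simp
        simp only [Finset.mem_insert, Finset.mem_singleton] at hia hja
        rcases hia with rfl | rfl <;> rcases hja with rfl | rfl
        · exact hij rfl
        · exact hG hab
        · exact hG hab.symm
        · exact hij rfl
      have hcard : ({i, j} : Finset (Fin p)).card = 2 := Finset.card_pair hij
      have := h {i, j} (Finset.mem_univ _)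
      rw [cim_pair D hij, if_pos hsk] at this
      unfold wG at this
      rw [if_neg hne, if_pos hcard, if_neg hne] at this
      norm_num at this
    · intro hG
      have hij : i ≠ j := G.ne_of_adj hG
      have hmem : ∃ a b, G.Adj a b ∧ ({i, j} : Finset (Fin p)) = {a, b} :=
        ⟨i, j, hG, rfl⟩
      have := h {i, j} (Finset.mem_univ _)
      rw [cim_pair D hij] at this
      unfold wG at this
      rw [if_pos hmem, if_pos hmem] at this
      by_contra hsk
      rw [if_neg hsk] at this
      norm_num at this
  · intro hsk S _
    unfold wG
    split_ifs with h1 h2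
    · obtain ⟨a, b, hab, rfl⟩ := h1
      have hne : a ≠ b := G.ne_of_adj hab
      rw [cim_pair D hne, if_pos (hsk ▸ hab)]
      norm_num
    · obtain ⟨a, b, hne, rfl⟩ := Finset.card_eq_two.mp h2
      have hnadj : ¬ G.Adj a b := fun hab => h1 ⟨a, b, hab, rfl⟩
      rw [cim_pair D hne, if_neg (hsk ▸ hnadj)]
      norm_num
    · ring

lemma dotF_linear (w : Finset (Fin p) → ℝ) : IsLinearMap ℝ (dotF w) := by
  constructor
  · intro x y
    unfold dotF
    rw [← Finset.sum_add_distrib]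
    exact Finset.sum_congr rfl fun S _ => by simp [mul_add]
  · intro c x
    unfold dotF
    simp only [smul_eq_mul, Pi.smul_apply, Finset.mul_sum]
    exact Finset.sum_congr rfl fun S _ => by ring

/-- Face of a convex hull cut out by a maximizing linear functional. -/
lemma hull_face_eq {V : Set (Finset (Fin p) → ℝ)} (w : Finset (Fin p) → ℝ) (a : ℝ)
    (hle : ∀ x ∈ V, dotF w x ≤ a) :
    {x ∈ convexHull ℝ V | dotF w x = a}
      = convexHull ℝ {x ∈ V | dotF w x = a} := by
  have hlin := dotF_linear (p := p) w
  apply Set.Subset.antisymm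
  · rintro x ⟨hxh, hxa⟩
    rw [convexHull_eq] at hxh
    obtain ⟨ι, t, c, z, hc0, hc1, hzV, hcm⟩ := hxh
    have hxsum : x = ∑ i ∈ t, c i • z i := by
      rw [← hcm, Finset.centerMass, hc1]; simp
    have hdot : dotF w x = ∑ i ∈ t, c i * dotF w (z i) := by
      rw [hxsum]
      calc dotF w (∑ i ∈ t, c i • z i)
          = ∑ i ∈ t, dotF w (c i • z i) :=
            map_sum (IsLinearMap.mk' (dotF w) hlin) _ t
        _ = ∑ i ∈ t, c i * dotF w (z i) := Finset.sum_congr rfl fun i _ => by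
            simpa using hlin.map_smul (c i) (z i)
    have hterm : ∀ i ∈ t, c i * (a - dotF w (z i)) ≥ 0 := fun i hi =>
      mul_nonneg (hc0 i hi) (sub_nonneg.mpr (hle _ (hzV i hi)))
    have hzero : ∑ i ∈ t, c i * (a - dotF w (z i)) = 0 := by
      have : ∑ i ∈ t, c i * (a - dotF w (z i))
          = (∑ i ∈ t, c i) * a - ∑ i ∈ t, c i * dotF w (z i) := by
        rw [Finset.sum_mul, ← Finset.sum_sub_distrib]
        exact Finset.sum_congr rfl fun i _ => by ring
      rw [this, hc1, ← hdot, hxa]; ring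
    have hall : ∀ i ∈ t, c i * (a - dotF w (z i)) = 0 :=
      (Finset.sum_eq_zero_iff_of_nonneg hterm).mp hzero
    -- restrict to the support of c
    set t' := t.filter (fun i => c i ≠ 0) with ht'
    have hsub : t' ⊆ t := Finset.filter_subset _ _
    have hc1' : ∑ i ∈ t', c i = 1 := by
      rw [ht', Finset.sum_filter_ne_zero, hc1]
    have hxsum' : x = ∑ i ∈ t', c i • z i := by
      rw [hxsum]
      refine (Finset.sum_subset hsub ?_).symm
      intro i hi hni
      have : c i = 0 := by
        by_contra hc
        exact hni (Finset.mem_filter.mpr ⟨hi, hc⟩)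
      simp [this]
    rw [convexHull_eq]
    refine ⟨ι, t', c, z, fun i hi => hc0 i (hsub hi), hc1', ?_, ?_⟩
    · intro i hi
      rw [ht', Finset.mem_filter] at hi
      refine ⟨hzV i hi.1, ?_⟩
      rcases mul_eq_zero.mp (hall i hi.1) with h | h
      · exact absurd h hi.2
      · linarith [sub_eq_zero.mp h]
    · rw [Finset.centerMass, hc1']; simp [hxsum']
  · intro x hx
    have h1 : x ∈ convexHull ℝ V :=
      convexHull_mono (fun y hy => hy.1) hx
    refine ⟨h1, ?_⟩
    have hge : x ∈ {y | a ≤ dotF w y} := by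
      refine convexHull_min ?_ (convex_halfSpace_ge hlin a) hx
      intro y hy
      exact le_of_eq hy.2.symm
    have hle' : dotF w x ≤ a :=
      convexHull_min (fun y hy => hle y hy) (convex_halfSpace_le hlin a) h1 
    exact le_antisymm hle' hge

end Aux

/-- For every undirected graph `G` on `[p]`, the polytope `CIM_G`
(convex hull of characteristic imsets of DAGs with skeleton exactly `G`) is a face of `CIM_p`. -/
theorem stmt4 {p : ℕ} (G : SimpleGraph (Fin p)) :
    IsFaceOf (convexHull ℝ {x | ∃ D : DAGraph p, D.skeleton = G ∧ x = D.cim})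
      (cimPolytope p) := by
  refine ⟨wG G, aG G, ?_, ?_⟩
  · intro x hx
    refine convexHull_min ?_ (convex_halfSpace_le (dotF_linear (wG G)) (aG G)) hx
    rintro y ⟨D, rfl⟩
    exact dot_le G D
  · simp only [cimPolytope]
    rw [hull_face_eq (wG G) (aG G)
      (by rintro y ⟨D, rfl⟩; exact dot_le G D)]
    congr 1
    ext x
    constructor
    · rintro ⟨D, hsk, rfl⟩
      exact ⟨⟨D, rfl⟩, (dot_eq_iff G D).mpr hsk⟩
    · rintro ⟨⟨D, rfl⟩, hdot⟩
      exact ⟨D, (dot_eq_iff G D).mp hdot, rfl⟩
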